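/- Let Γ be a finite simplicial graph and 𝒢 = (G_v)_{v∈V} a family of nontrivial groups, and let X(Γ,𝒢) be the Cayley graph of Γ𝒢 with respect to the generating set ⋃_{v∈V} (Ĝ_v ∖ {1}), with graph distance d. Let g ∈ Γ𝒢, let u, v ∈ V be distinct, and let a ∈ Ĝ_u ∖ {1} and b ∈ Ĝ_v ∖ {1}. Then there exists w ∈ Γ𝒢 adjacent in X(Γ,𝒢) to both g·a and g·b with d(g,w) = 2 if and only if u and v are adjacent in Γ; and in that case w = g·a·b is the unique such element. -/

import Mathlib

open scoped Pointwise

section GraphProductDefs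

variable {V : Type} (Γ : SimpleGraph V) (G : V → Type) [∀ v, Group (G v)]

/-- The set of commutation relators defining the graph product of the family `G` over `Γ`. -/
def graphProductRels : Set (Monoid.CoprodI G) :=
  { x | ∃ (u v : V) (g : G u) (h : G v), Γ.Adj u v ∧
      x = Monoid.CoprodI.of g * Monoid.CoprodI.of h *
        (Monoid.CoprodI.of g)⁻¹ * (Monoid.CoprodI.of h)⁻¹ }

/-- The graph product of the family `G` over the simplicial graph `Γ`. -/
abbrev GraphProduct : Type :=
  Monoid.CoprodI G ⧸ Subgroup.normalClosure (graphProductRels Γ G)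

/-- The canonical map from a vertex group to the graph product. -/
def GraphProduct.of (v : V) : G v →* GraphProduct Γ G :=
  (QuotientGroup.mk' (Subgroup.normalClosure (graphProductRels Γ G))).comp Monoid.CoprodI.of

/-- The image `Ĝ_v` of a vertex group in the graph product. -/
def vertexSubgroup (v : V) : Subgroup (GraphProduct Γ G) :=
  (GraphProduct.of Γ G v).range

/-- The subgroup `⟨Λ⟩` generated by the vertex groups with vertices in `Λ`. -/
def spanSubgroup (Λ : Set V) : Subgroup (GraphProduct Γ G) :=
  ⨆ v ∈ Λ, vertexSubgroup Γ G v

/-- The star of a vertex: the vertex together with its neighbours. -/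
def starSet (u : V) : Set V := insert u {w | Γ.Adj u w}

/-- `Λ` is a connected component of the subgraph of `Γ` induced on `S`: it is a nonempty
connected subset of `S` closed under adjacency within `S`. -/
def IsConnCompOf (S Λ : Set V) : Prop :=
  Λ.Nonempty ∧ Λ ⊆ S ∧ (Γ.induce Λ).Connected ∧
    ∀ a ∈ Λ, ∀ b ∈ S, Γ.Adj a b → b ∈ Λ

/-- A local automorphism: permutes the vertex subgroups according to a graph automorphism. -/
def IsLocalAut (φ : MulAut (GraphProduct Γ G)) : Prop :=
  ∃ σ : Γ ≃g Γ, ∀ v : V,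
    Subgroup.map φ.toMonoidHom (vertexSubgroup Γ G v) = vertexSubgroup Γ G (σ v)

/-- A partial conjugation: conjugates the vertex groups of a connected component `Λ` of the
graph induced on the complement of the star of `u` by an element `h ∈ Ĝ_u`, and fixes the
other vertex groups pointwise. -/
def IsPartialConj (φ : MulAut (GraphProduct Γ G)) : Prop :=
  ∃ (u : V) (Λ : Set V) (h : GraphProduct Γ G),
    h ∈ vertexSubgroup Γ G u ∧
    IsConnCompOf Γ {w | w ∉ starSet Γ u} Λ ∧
    (∀ w ∈ Λ, ∀ x ∈ vertexSubgroup Γ G w, φ x = h * x * h⁻¹) ∧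
    (∀ w, w ∉ Λ → ∀ x ∈ vertexSubgroup Γ G w, φ x = x)

/-- The subgroup of `Aut(Γ𝒢)` generated by local automorphisms and partial conjugations. -/
def ConjP : Subgroup (MulAut (GraphProduct Γ G)) :=
  Subgroup.closure {φ | IsLocalAut Γ G φ ∨ IsPartialConj Γ G φ}

/-- A conjugating automorphism: sends each vertex subgroup to a conjugate of a vertex
subgroup. -/
def IsConjugating (φ : MulAut (GraphProduct Γ G)) : Prop :=
  ∀ v : V, ∃ (w : V) (g : GraphProduct Γ G),
    Subgroup.map φ.toMonoidHom (vertexSubgroup Γ G v) =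
      Subgroup.map (MulAut.conj g).toMonoidHom (vertexSubgroup Γ G w)

end GraphProductDefs

section Extra

variable {V : Type} (Γ : SimpleGraph V) (G : V → Type) [∀ v, Group (G v)]

/-- The Cayley graph `X(Γ,𝒢)` of the graph product with respect to the union of the
(nontrivial elements of the) vertex subgroups. -/
def cayley : SimpleGraph (GraphProduct Γ G) where
  Adj x y := x ≠ y ∧ ∃ v : V, x⁻¹ * y ∈ vertexSubgroup Γ G v
  symm := by
    constructor
    rintro x y ⟨hxy, v, hv⟩
    exact ⟨hxy.symm, v, by simpa using (vertexSubgroup Γ G v).inv_mem hv⟩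
  loopless := ⟨fun x h => h.1 rfl⟩

/-- A molecular graph: finite, connected, minimal degree at least 2, girth at least 5. -/
def Molecular : Prop :=
  Γ.Connected ∧ (∀ v : V, 2 ≤ (Γ.neighborSet v).ncard) ∧ 5 ≤ Γ.girth

/-- An atomic graph: molecular, and the subgraph induced on the complement of each star is
nonempty and connected. -/
def Atomic : Prop :=
  Molecular Γ ∧ ∀ u : V, {w | w ∉ starSet Γ u}.Nonempty ∧
    (Γ.induce {w | w ∉ starSet Γ u}).Connected

/-- The link of a set of vertices: the vertices adjacent to every vertex of the set. -/
def linkSet (Λ : Set V) : Set V := {w | ∀ a ∈ Λ, Γ.Adj w a}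

/-- A subgroup decomposes non-trivially as a direct product. -/
def IsNontrivDirectProduct (H : Subgroup (GraphProduct Γ G)) : Prop :=
  ∃ (A B : Type) (_ : Group A) (_ : Group B),
    Nontrivial A ∧ Nontrivial B ∧ Nonempty (H ≃* A × B)

/-- `Γ` has a SIL: two distinct non-adjacent vertices `u`, `v` such that the graph induced on
the complement of `link(u) ∩ link(v)` has a connected component containing neither `u` nor
`v`. -/
def HasSIL : Prop :=
  ∃ u v : V, u ≠ v ∧ ¬ Γ.Adj u v ∧
    ∃ Λ : Set V, IsConnCompOf Γ {w | ¬ (Γ.Adj u w ∧ Γ.Adj v w)} Λ ∧ u ∉ Λ ∧ v ∉ Λ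

end Extra

section SquareAux

open Monoid

variable {V : Type} (Γ : SimpleGraph V) (G : V → Type) [∀ v, Group (G v)]

/-- Universal property of the graph product. -/
def glift {H : Type} [Group H] (f : ∀ v, G v →* H)
    (hf : ∀ a b : V, Γ.Adj a b → ∀ x y, Commute (f a x) (f b y)) :
    GraphProduct Γ G →* H :=
  QuotientGroup.lift (Subgroup.normalClosure (graphProductRels Γ G))
    (CoprodI.lift f) (by
    intro r hr
    refine Subgroup.normalClosure_le_normal (N := (CoprodI.lift f).ker) ?_ hr
    rintro _ ⟨a, b, x, y, hab, rfl⟩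
    have h1 : Commute (f a x) (f b y) := hf a b hab x y
    simp only [SetLike.mem_coe, MonoidHom.mem_ker, map_mul, map_inv, CoprodI.lift_of]
    rw [h1.eq, mul_inv_cancel_right, mul_inv_cancel])

@[simp] lemma glift_of {H : Type} [Group H] (f : ∀ v, G v →* H)
    (hf : ∀ a b : V, Γ.Adj a b → ∀ x y, Commute (f a x) (f b y)) (v : V) (x : G v) :
    glift Γ G f hf (GraphProduct.of Γ G v x) = f v x := by
  simp [glift, GraphProduct.of]

/-- Transport along an equality of vertices. -/
def eqHom {w u : V} (h : w = u) : G w →* G u := by subst h; exact MonoidHom.id _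

@[simp] lemma eqHom_rfl (w : V) : eqHom G (rfl : w = w) = MonoidHom.id (G w) := rfl

open Classical in
/-- The family defining the retraction onto a single vertex group. -/
noncomputable def single (u : V) (w : V) : G w →* G u :=
  if h : w = u then eqHom G h else 1

@[simp] lemma single_same (u : V) (x : G u) : single G u u x = x := by
  simp [single]

lemma single_ne {u w : V} (h : w ≠ u) (x : G w) : single G u w x = 1 := by
  simp [single, h]

/-- Retraction of the graph product onto a vertex group. -/
noncomputable def rho (u : V) : GraphProduct Γ G →* G u :=
  glift Γ G (single G u) (by
    intro a b hab x y
    rcases eq_or_ne a u with rfl | hau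
    · rw [single_ne G hab.ne' y]
      exact Commute.one_right _
    · rw [single_ne G hau x]
      exact Commute.one_left _)

@[simp] lemma rho_of_same (u : V) (x : G u) :
    rho Γ G u (GraphProduct.of Γ G u x) = x := by
  simp [rho]

lemma rho_of_ne {u w : V} (h : w ≠ u) (x : G w) :
    rho Γ G u (GraphProduct.of Γ G w x) = 1 := by
  simp [rho, single_ne G h]

lemma of_eq_one_iff (v : V) (x : G v) :
    GraphProduct.of Γ G v x = 1 ↔ x = 1 := by
  constructor
  · intro h
    have := congrArg (rho Γ G v) h
    simpa using this
  · rintro rfl; simp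

lemma mem_vertexSubgroup_iff {r : V} {c : GraphProduct Γ G} :
    c ∈ vertexSubgroup Γ G r ↔ ∃ x : G r, GraphProduct.of Γ G r x = c :=
  Iff.rfl

open Classical in
/-- Family defining the retraction onto a pair of adjacent vertex groups. -/
noncomputable def pairFam (u v : V) (w : V) : G w →* G u × G v :=
  if h : w = u then (MonoidHom.inl _ _).comp (eqHom G h)
  else if h : w = v then (MonoidHom.inr _ _).comp (eqHom G h) else 1

@[simp] lemma pairFam_u (u v : V) (x : G u) : pairFam G u v u x = (x, 1) := by
  simp [pairFam]

lemma pairFam_v {u v : V} (h : u ≠ v) (x : G v) : pairFam G u v v x = (1, x) := by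
  simp [pairFam, h.symm]

lemma pairFam_other {u v w : V} (h1 : w ≠ u) (h2 : w ≠ v) (x : G w) :
    pairFam G u v w x = 1 := by
  simp [pairFam, h1, h2]

lemma inl_inr_commute {A B : Type} [Group A] [Group B] (x : A) (y : B) :
    Commute ((x, 1) : A × B) ((1, y) : A × B) := by
  simp [Commute, SemiconjBy, Prod.ext_iff]

/-- The retraction onto a pair of adjacent vertex groups. -/
noncomputable def pairHom (u v : V) (h : Γ.Adj u v) :
    GraphProduct Γ G →* G u × G v :=
  glift Γ G (pairFam G u v) (by
    intro a b hab x y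
    rcases eq_or_ne a u with rfl | hau
    · rcases eq_or_ne b v with rfl | hbv
      · rw [pairFam_u, pairFam_v G h.ne]
        exact inl_inr_commute x y
      · rw [pairFam_other G hab.ne' hbv]
        exact Commute.one_right _
    · rcases eq_or_ne a v with rfl | hav
      · rcases eq_or_ne b u with rfl | hbu
        · rw [pairFam_u, pairFam_v G h.ne]
          exact (inl_inr_commute y x).symm
        · rw [pairFam_other G hbu hab.ne']
          exact Commute.one_right _
      · rw [pairFam_other G hau hav]
        exact Commute.one_left _)

@[simp] lemma pairHom_of_u (u v : V) (h : Γ.Adj u v) (x : G u) :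
    pairHom Γ G u v h (GraphProduct.of Γ G u x) = (x, 1) := by
  simp [pairHom]

lemma pairHom_of_v (u v : V) (h : Γ.Adj u v) (x : G v) :
    pairHom Γ G u v h (GraphProduct.of Γ G v x) = (1, x) := by
  simp [pairHom, pairFam_v G h.ne]

lemma pairHom_of_other {u v w : V} (h : Γ.Adj u v) (h1 : w ≠ u) (h2 : w ≠ v)
    (x : G w) : pairHom Γ G u v h (GraphProduct.of Γ G w x) = 1 := by
  simp [pairHom, pairFam_other G h1 h2]

lemma prod_not_in_vertex {u v : V} (h : Γ.Adj u v) {x : G u} {y : G v}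
    (hx : x ≠ 1) (hy : y ≠ 1) (r : V) :
    GraphProduct.of Γ G u x * GraphProduct.of Γ G v y ∉ vertexSubgroup Γ G r := by
  rintro ⟨c, hc⟩
  have h2 : pairHom Γ G u v h (GraphProduct.of Γ G r c) = (x, y) := by
    rw [hc, map_mul, pairHom_of_u, pairHom_of_v]
    simp
  rcases eq_or_ne r u with rfl | hru
  · rw [pairHom_of_u] at h2
    exact hy (congrArg Prod.snd h2).symm
  · rcases eq_or_ne r v with rfl | hrv
    · rw [pairHom_of_v Γ G u r h] at h2
      exact hx (congrArg Prod.fst h2).symm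
    · rw [pairHom_of_other Γ G h hru hrv] at h2
      exact hx (congrArg Prod.fst h2).symm

lemma prod_ne_one {u v : V} (huv : u ≠ v) {x : G u} (y : G v) (hx : x ≠ 1) :
    GraphProduct.of Γ G u x * GraphProduct.of Γ G v y ≠ 1 := by
  intro h
  have := congrArg (rho Γ G u) h
  rw [map_mul, rho_of_same, rho_of_ne Γ G huv.symm, mul_one, map_one] at this
  exact hx this

/-- The two-element family of groups `G u`, `G v`. -/
def FF (u v : V) : Bool → Type := fun b => bif b then G u else G v

instance (u v : V) (b : Bool) : Group (FF G u v b) := by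
  cases b <;> (dsimp [FF]; infer_instance)

open Classical in
/-- Family defining the retraction onto the free product of two non-adjacent vertex groups. -/
noncomputable def freeFam (u v : V) (w : V) : G w →* CoprodI (FF G u v) :=
  if h : w = u then ((CoprodI.of : FF G u v true →* _)).comp (eqHom G h)
  else if h : w = v then ((CoprodI.of : FF G u v false →* _)).comp (eqHom G h) else 1

@[simp] lemma freeFam_u (u v : V) (x : G u) :
    freeFam G u v u x = (CoprodI.of : FF G u v true →* _) x := by
  have e1 : freeFam G u v u
      = ((CoprodI.of : FF G u v true →* _)).comp (eqHom G rfl) := dif_pos rfl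
  rw [e1]
  rfl

lemma freeFam_v {u v : V} (h : u ≠ v) (x : G v) :
    freeFam G u v v x = (CoprodI.of : FF G u v false →* _) x := by
  classical
  have e1 : freeFam G u v v = (if h2 : v = v then
      ((CoprodI.of : FF G u v false →* _)).comp (eqHom G h2) else 1) := dif_neg h.symm
  rw [e1, dif_pos rfl]
  rfl

lemma freeFam_other {u v w : V} (h1 : w ≠ u) (h2 : w ≠ v) (x : G w) :
    freeFam G u v w x = 1 := by
  simp [freeFam, h1, h2]

/-- The retraction onto the free product of two non-adjacent vertex groups. -/
noncomputable def freeHom (u v : V) (hnadj : ¬ Γ.Adj u v) :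
    GraphProduct Γ G →* CoprodI (FF G u v) :=
  glift Γ G (freeFam G u v) (by
    intro a b hab x y
    rcases eq_or_ne a u with rfl | hau
    · rcases eq_or_ne b v with rfl | hbv
      · exact absurd hab hnadj
      · rw [freeFam_other G hab.ne' hbv]
        exact Commute.one_right _
    · rcases eq_or_ne a v with rfl | hav
      · rcases eq_or_ne b u with rfl | hbu
        · exact absurd hab.symm hnadj
        · rw [freeFam_other G hbu hab.ne']
          exact Commute.one_right _
      · rw [freeFam_other G hau hav]
        exact Commute.one_left _)

lemma coprodI_not_comm {u v : V} {x : FF G u v true} {y : FF G u v false}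
    (hx : x ≠ 1) (hy : y ≠ 1) :
    CoprodI.of x * CoprodI.of y ≠ CoprodI.of y * CoprodI.of x := by
  intro h
  let w1 : CoprodI.Word (FF G u v) :=
    ⟨[⟨true, x⟩, ⟨false, y⟩], by
      intro l hl
      simp only [List.mem_cons, List.not_mem_nil, or_false] at hl
      rcases hl with rfl | rfl
      · exact hx
      · exact hy, by
      refine List.isChain_cons_cons.2 ⟨?_, List.isChain_singleton _⟩
      simp⟩
  let w2 : CoprodI.Word (FF G u v) :=
    ⟨[⟨false, y⟩, ⟨true, x⟩], by
      intro l hl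
      simp only [List.mem_cons, List.not_mem_nil, or_false] at hl
      rcases hl with rfl | rfl
      · exact hy
      · exact hx, by
      refine List.isChain_cons_cons.2 ⟨?_, List.isChain_singleton _⟩
      simp⟩
  have h1 : w1.prod = CoprodI.of x * CoprodI.of y := by
    simp [CoprodI.Word.prod, w1]
  have h2 : w2.prod = CoprodI.of y * CoprodI.of x := by
    simp [CoprodI.Word.prod, w2]
  have hinj : Function.Injective (CoprodI.Word.prod (M := FF G u v)) :=
    (@Monoid.CoprodI.Word.equiv Bool (FF G u v) _ instDecidableEqBool
      (fun _ => Classical.decEq _)).symm.injective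
  have hw : w1 = w2 := hinj (by rw [h1, h2, h])
  have := congrArg (fun w => w.toList) hw
  simp [w1, w2] at this

lemma not_comm_of_not_adj {u v : V} (huv : u ≠ v) (hnadj : ¬ Γ.Adj u v)
    {x : G u} {y : G v} (hx : x ≠ 1) (hy : y ≠ 1) :
    GraphProduct.of Γ G u x * GraphProduct.of Γ G v y ≠
      GraphProduct.of Γ G v y * GraphProduct.of Γ G u x := by
  intro h
  have h2 := congrArg (freeHom Γ G u v hnadj) h
  rw [map_mul, map_mul] at h2
  rw [show freeHom Γ G u v hnadj (GraphProduct.of Γ G u x)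
        = (CoprodI.of : FF G u v true →* _) x by simp [freeHom],
      show freeHom Γ G u v hnadj (GraphProduct.of Γ G v y)
        = (CoprodI.of : FF G u v false →* _) y by
        simp [freeHom, freeFam_v G huv]] at h2
  exact coprodI_not_comm G (x := x) (y := y) hx hy h2

lemma of_comm_of_adj {u v : V} (h : Γ.Adj u v) (x : G u) (y : G v) :
    GraphProduct.of Γ G u x * GraphProduct.of Γ G v y =
      GraphProduct.of Γ G v y * GraphProduct.of Γ G u x := by
  have hmem : (CoprodI.of x * CoprodI.of y * (CoprodI.of x)⁻¹ * (CoprodI.of y)⁻¹ :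
      CoprodI G) ∈ Subgroup.normalClosure (graphProductRels Γ G) :=
    Subgroup.subset_normalClosure ⟨u, v, x, y, h, rfl⟩
  have h1 : ((CoprodI.of x * CoprodI.of y * (CoprodI.of x)⁻¹ * (CoprodI.of y)⁻¹ :
      CoprodI G) : GraphProduct Γ G) = 1 := (QuotientGroup.eq_one_iff _).2 hmem
  have h2 : GraphProduct.of Γ G u x * GraphProduct.of Γ G v y *
      (GraphProduct.of Γ G u x)⁻¹ * (GraphProduct.of Γ G v y)⁻¹ = 1 := by
    simpa [GraphProduct.of, QuotientGroup.mk_mul, QuotientGroup.mk_inv] using h1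
  have h3 : (GraphProduct.of Γ G u x * GraphProduct.of Γ G v y) *
      (GraphProduct.of Γ G v y * GraphProduct.of Γ G u x)⁻¹ = 1 := by
    rw [mul_inv_rev, ← mul_assoc]
    exact h2
  exact mul_inv_eq_one.mp h3

end SquareAux

/-- **Fact.** Two edges of `X(Γ,𝒢)` issued from a common vertex `g` and labelled by distinct
vertex groups `G_u`, `G_v` span a square if and only if `u` and `v` are adjacent, and in
that case the fourth vertex is `g·a·b`. -/
theorem square_iff_adjacent {V : Type} [Fintype V]
    (Γ : SimpleGraph V) (G : V → Type) [∀ v, Group (G v)] [∀ v, Nontrivial (G v)]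
    (g : GraphProduct Γ G) (u v : V) (huv : u ≠ v)
    (a b : GraphProduct Γ G)
    (ha : a ∈ vertexSubgroup Γ G u) (ha1 : a ≠ 1)
    (hb : b ∈ vertexSubgroup Γ G v) (hb1 : b ≠ 1) :
    ((∃ w : GraphProduct Γ G, (cayley Γ G).Adj (g * a) w ∧ (cayley Γ G).Adj (g * b) w ∧
        (cayley Γ G).dist g w = 2) ↔ Γ.Adj u v) ∧
    (Γ.Adj u v → ∀ w : GraphProduct Γ G, (cayley Γ G).Adj (g * a) w →
      (cayley Γ G).Adj (g * b) w → (cayley Γ G).dist g w = 2 → w = g * a * b) := by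
  classical
  obtain ⟨a', rfl⟩ := ha
  obtain ⟨b', rfl⟩ := hb
  have ha' : a' ≠ 1 := fun h => ha1 (by rw [h, map_one])
  have hb' : b' ≠ 1 := fun h => hb1 (by rw [h, map_one])
  set oa := GraphProduct.of Γ G u a' with hoa
  set ob := GraphProduct.of Γ G v b' with hob
  have key : ∀ w, (cayley Γ G).Adj (g * oa) w → (cayley Γ G).Adj (g * ob) w →
      (cayley Γ G).dist g w = 2 → w = g * oa * ob ∧ oa * ob = ob * oa := by
    intro w hw1 hw2 hdist
    obtain ⟨hne1, p, hp⟩ := hw1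
    obtain ⟨hne2, q, hq⟩ := hw2
    obtain ⟨s', hs⟩ := MonoidHom.mem_range.mp hp
    obtain ⟨t', ht⟩ := MonoidHom.mem_range.mp hq
    have hgw : g ≠ w := by
      rintro rfl
      simp [SimpleGraph.dist_self] at hdist
    have hnadjgw : ¬ (cayley Γ G).Adj g w := fun h => by
      have := SimpleGraph.dist_eq_one_iff_adj.mpr h
      omega
    have hno : ∀ r, g⁻¹ * w ∉ vertexSubgroup Γ G r := fun r hr =>
      hnadjgw ⟨hgw, r, hr⟩
    have hw_eq : g * oa * GraphProduct.of Γ G p s' = w := by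
      rw [hs, mul_inv_cancel_left]
    have hw_eq2 : g * ob * GraphProduct.of Γ G q t' = w := by
      rw [ht, mul_inv_cancel_left]
    have hs1 : s' ≠ 1 := by
      rintro rfl
      apply hne1
      rw [← hw_eq]; simp
    have ht1 : t' ≠ 1 := by
      rintro rfl
      apply hne2
      rw [← hw_eq2]; simp
    have hginv : g⁻¹ * w = oa * GraphProduct.of Γ G p s' := by
      rw [← hw_eq]; group
    have hginv2 : g⁻¹ * w = ob * GraphProduct.of Γ G q t' := by
      rw [← hw_eq2]; group
    have hE : oa * GraphProduct.of Γ G p s' = ob * GraphProduct.of Γ G q t' := by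
      rw [← hginv, ← hginv2]
    have hpu : p ≠ u := by
      rintro rfl
      exact hno p (by
        rw [hginv, hoa, ← map_mul]
        exact MonoidHom.mem_range.mpr ⟨a' * s', rfl⟩)
    have hqv : q ≠ v := by
      rintro rfl
      exact hno q (by
        rw [hginv2, hob, ← map_mul]
        exact MonoidHom.mem_range.mpr ⟨b' * t', rfl⟩)
    have h3 := congrArg (rho Γ G u) hE
    rw [map_mul, map_mul, hoa, hob, rho_of_same, rho_of_ne Γ G hpu,
      rho_of_ne Γ G (Ne.symm huv), mul_one, one_mul] at h3
    have hqu : q = u := by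
      by_contra hqu
      rw [rho_of_ne Γ G hqu] at h3
      exact ha' h3
    subst hqu
    rw [rho_of_same] at h3
    have h4 := congrArg (rho Γ G v) hE
    rw [map_mul, map_mul, hoa, hob, rho_of_same, rho_of_ne Γ G huv,
      rho_of_ne Γ G hqv, mul_one, one_mul] at h4
    have hpv : p = v := by
      by_contra hpv
      rw [rho_of_ne Γ G hpv] at h4
      exact hb' h4.symm
    subst hpv
    rw [rho_of_same] at h4
    subst h3
    subst h4
    exact ⟨hw_eq.symm, hE⟩
  have hmemb : (g * oa)⁻¹ * (g * oa * ob) ∈ vertexSubgroup Γ G v := by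
    rw [inv_mul_cancel_left]
    exact MonoidHom.mem_range.mpr ⟨b', rfl⟩
  refine ⟨⟨?_, ?_⟩, fun _ w hw1 hw2 hdist => (key w hw1 hw2 hdist).1⟩
  · rintro ⟨w, hw1, hw2, hdist⟩
    by_contra hnadj
    exact not_comm_of_not_adj Γ G huv hnadj ha' hb' (key w hw1 hw2 hdist).2
  · intro hadj
    have hcomm : oa * ob = ob * oa := of_comm_of_adj Γ G hadj a' b'
    have hA2 : (cayley Γ G).Adj (g * oa) (g * oa * ob) := by
      refine ⟨fun h => hb1 (left_eq_mul.mp h), v, hmemb⟩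
    have hA1 : (cayley Γ G).Adj g (g * oa) := by
      refine ⟨fun h => ha1 (left_eq_mul.mp h), u, ?_⟩
      rw [inv_mul_cancel_left]
      exact MonoidHom.mem_range.mpr ⟨a', rfl⟩
    have hA3 : (cayley Γ G).Adj (g * ob) (g * oa * ob) := by
      refine ⟨?_, u, ?_⟩
      · intro h
        rw [mul_assoc] at h
        have h2 := mul_left_cancel h
        exact ha1 (right_eq_mul.mp h2)
      · have hcalc : (g * ob)⁻¹ * (g * oa * ob) = oa := by
          rw [mul_assoc g oa ob, hcomm]
          group
        rw [hcalc]
        exact MonoidHom.mem_range.mpr ⟨a', rfl⟩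
    refine ⟨g * oa * ob, hA2, hA3, ?_⟩
    have hle : (cayley Γ G).dist g (g * oa * ob) ≤ 2 := by
      have h := SimpleGraph.dist_le
        (SimpleGraph.Walk.cons hA1 (SimpleGraph.Walk.cons hA2 SimpleGraph.Walk.nil))
      simpa using h
    have hnv := prod_not_in_vertex Γ G hadj ha' hb'
    have hne0 : g ≠ g * oa * ob := by
      intro h
      rw [mul_assoc] at h
      exact prod_ne_one Γ G huv b' ha' (left_eq_mul.mp h)
    have hnadj2 : ¬ (cayley Γ G).Adj g (g * oa * ob) := by
      rintro ⟨-, r, hr⟩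
      rw [mul_assoc, inv_mul_cancel_left] at hr
      exact hnv r hr
    have h0 : (cayley Γ G).dist g (g * oa * ob) ≠ 0 := by
      rw [SimpleGraph.dist_ne_zero_iff_ne_and_reachable]
      exact ⟨hne0, ⟨SimpleGraph.Walk.cons hA1
        (SimpleGraph.Walk.cons hA2 SimpleGraph.Walk.nil)⟩⟩
    have h1 : (cayley Γ G).dist g (g * oa * ob) ≠ 1 := fun h =>
      hnadj2 (SimpleGraph.dist_eq_one_iff_adj.mp h)
    omega
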